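/- For any solution of the total biomass equation dP/dt = (r_p(V) − k_p)P − (m_h H_p + m_i I_p)P − γ I_p with nonnegative components, P satisfies the differential inequality dP/dt ≤ (r_p(0) − k_p)P − m_h P², and hence limsup_{t→∞} P(t) ≤ (r_p(0) − k_p)/m_h, assuming r_p(0) > k_p and m_i ≥ m_h. -/

import Mathlib

private lemma decay_aux (P : ℝ → ℝ) (c s t : ℝ) (hst : s ≤ t)
    (hcont : ContinuousOn P (Set.Icc s t))
    (hder : ∀ u ∈ Set.Ioo s t, HasDerivAt P (deriv P u) u ∧ deriv P u ≤ -c) :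
    P t ≤ P s - c * (t - s) := by
  have hg : AntitoneOn (fun u => P u + c * u) (Set.Icc s t) := by
    apply antitoneOn_of_deriv_nonpos (convex_Icc s t)
    · exact hcont.add (continuous_const.mul continuous_id).continuousOn
    · intro x hx
      rw [interior_Icc] at hx
      have h2 : HasDerivAt (fun u : ℝ => c * u) c x := by
        simpa using (hasDerivAt_id x).const_mul c
      exact (((hder x hx).1.add h2).differentiableAt).differentiableWithinAt
    · intro x hx
      rw [interior_Icc] at hx
      have h2 : HasDerivAt (fun u : ℝ => c * u) c x := by
        simpa using (hasDerivAt_id x).const_mul c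
      rw [show deriv (fun u => P u + c * u) x = deriv P x + c from ((hder x hx).1.add h2).deriv]
      linarith [(hder x hx).2]
  have := hg (Set.left_mem_Icc.mpr hst) (Set.right_mem_Icc.mpr hst) hst
  simp only at this
  linarith

theorem stmt4 (rp : ℝ → ℝ) (r kp mh mi γ : ℝ)
    (hrp_anti : AntitoneOn rp (Set.Ici 0)) (hrp0 : rp 0 = r)
    (hr : r > kp) (hkp : kp > 0) (hmh : mh > 0) (hmi : mi ≥ mh) (hγ : γ ≥ 0)
    (Hp Ip V P : ℝ → ℝ)
    (hP : ∀ t, P t = Hp t + Ip t)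
    (hHp : ∀ t ≥ (0:ℝ), 0 ≤ Hp t) (hIp : ∀ t ≥ (0:ℝ), 0 ≤ Ip t)
    (hV : ∀ t ≥ (0:ℝ), 0 ≤ V t)
    (hode : ∀ t ≥ (0:ℝ), HasDerivAt P
      ((rp (V t) - kp) * P t - (mh * Hp t + mi * Ip t) * P t - γ * Ip t) t) :
    (∀ t ≥ (0:ℝ), deriv P t ≤ (r - kp) * P t - mh * (P t) ^ 2) ∧
    Filter.limsup P Filter.atTop ≤ (r - kp) / mh := by
  have hPnn : ∀ t ≥ (0:ℝ), 0 ≤ P t := fun t ht => by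
    rw [hP t]; exact add_nonneg (hHp t ht) (hIp t ht)
  have hd1 : ∀ t ≥ (0:ℝ), deriv P t ≤ (r - kp) * P t - mh * (P t) ^ 2 := by
    intro t ht
    rw [(hode t ht).deriv]
    have hrpV : rp (V t) ≤ r := by
      rw [← hrp0]
      exact hrp_anti (Set.mem_Ici.mpr le_rfl) (Set.mem_Ici.mpr (hV t ht)) (hV t ht)
    have h1 : (rp (V t) - kp) * P t ≤ (r - kp) * P t :=
      mul_le_mul_of_nonneg_right (by linarith) (hPnn t ht)
    have h2 : mh * (P t) ^ 2 ≤ (mh * Hp t + mi * Ip t) * P t := by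
      have hkeyq : (mh * Hp t + mi * Ip t) * P t - mh * (P t) ^ 2
          = (mi - mh) * Ip t * P t := by rw [hP t]; ring
      nlinarith [mul_nonneg (mul_nonneg (sub_nonneg.mpr hmi) (hIp t ht)) (hPnn t ht)]
    nlinarith [mul_nonneg hγ (hIp t ht)]
  refine ⟨hd1, ?_⟩
  set K : ℝ := (r - kp) / mh with hK
  have hKpos : 0 < K := div_pos (by linarith) hmh
  have hmhK : mh * K = r - kp := by rw [hK]; field_simp
  have hPd : ∀ u ≥ (0:ℝ), HasDerivAt P (deriv P u) u :=
    fun u hu => ((hode u hu).differentiableAt).hasDerivAt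
  have hcont : ∀ s t : ℝ, 0 ≤ s → ContinuousOn P (Set.Icc s t) := by
    intro s t hs u hu
    exact ((hPd u (le_trans hs hu.1)).continuousAt).continuousWithinAt
  -- eventual bound
  have hev : ∀ ε > (0:ℝ), ∀ᶠ t in Filter.atTop, P t ≤ K + ε := by
    intro ε hε
    set c : ℝ := mh * ε * (K + ε) with hc
    have hcpos : 0 < c := by positivity
    have hkey : ∀ u ≥ (0:ℝ), K + ε ≤ P u → deriv P u ≤ -c := by
      intro u hu hup
      have h1 := hd1 u hu
      have : (r - kp) * P u - mh * (P u) ^ 2 ≤ -c := by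
        rw [← hmhK, hc]
        nlinarith [mul_nonneg (le_of_lt hmh) (mul_nonneg (sub_nonneg.mpr hup) (by linarith : (0:ℝ) ≤ P u + ε))]
      linarith
    -- find T with P T ≤ K + ε
    obtain ⟨T, hT0, hTle⟩ : ∃ T ≥ (0:ℝ), P T ≤ K + ε := by
      by_contra hcon
      push_neg at hcon
      set T0 : ℝ := max 0 ((P 0 - (K + ε)) / c) + 1 with hT0def
      have hT0nn : (0:ℝ) ≤ T0 :=
        add_nonneg (le_max_left 0 _) zero_le_one
      have hdecay := decay_aux P c 0 T0 hT0nn (hcont 0 T0 le_rfl) ?_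
      · have h1 : (P 0 - (K + ε)) / c ≤ T0 - 1 := by
          rw [hT0def]; simp [le_max_right]
        have h2 : P 0 - (K + ε) ≤ c * (T0 - 1) := by
          rw [div_le_iff₀ hcpos] at h1; linarith
        have := hcon T0 hT0nn
        nlinarith
      · intro u hu
        refine ⟨hPd u (le_of_lt hu.1), hkey u (le_of_lt hu.1) (le_of_lt (hcon u (le_of_lt hu.1)))⟩
    -- invariance: ∀ t ≥ T, P t ≤ K + ε
    rw [Filter.eventually_atTop]
    refine ⟨T, fun t hTt => ?_⟩
    by_contra hlt
    push_neg at hlt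
    have hTt' : T < t := by
      rcases lt_or_eq_of_le hTt with h | h
      · exact h
      · exact absurd hTle (by rw [h]; linarith)
    set S : Set ℝ := Set.Icc T t ∩ P ⁻¹' (Set.Iic (K + ε)) with hS
    have hSclosed : IsClosed S :=
      (hcont T t hT0).preimage_isClosed_of_isClosed isClosed_Icc isClosed_Iic
    have hSne : S.Nonempty := ⟨T, ⟨le_rfl, le_of_lt hTt'⟩, hTle⟩
    have hSbdd : BddAbove S := ⟨t, fun x hx => hx.1.2⟩
    set s : ℝ := sSup S with hs
    have hsmem : s ∈ S := hSclosed.csSup_mem hSne hSbdd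
    have hsT : T ≤ s := hsmem.1.1
    have hst : s ≤ t := hsmem.1.2
    have hs0 : (0:ℝ) ≤ s := le_trans hT0 hsT
    have hslt : s < t := by
      rcases lt_or_eq_of_le hst with h | h
      · exact h
      · exact absurd hsmem.2 (by rw [h]; simpa using hlt)
    have habove : ∀ u ∈ Set.Ioo s t, K + ε < P u := by
      intro u hu
      by_contra hle
      push_neg at hle
      have : u ∈ S := ⟨⟨le_trans hsT (le_of_lt hu.1), le_of_lt hu.2⟩, hle⟩
      exact absurd (le_csSup hSbdd this) (not_le.mpr hu.1)
    have hdecay := decay_aux P c s t (le_of_lt hslt) (hcont s t hs0) ?_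
    · have : P s ≤ K + ε := hsmem.2
      nlinarith
    · intro u hu
      exact ⟨hPd u (le_trans hs0 (le_of_lt hu.1)),
        hkey u (le_trans hs0 (le_of_lt hu.1)) (le_of_lt (habove u hu))⟩
  -- conclude limsup bound
  have hcob : Filter.IsCoboundedUnder (· ≤ ·) Filter.atTop P := by
    apply Filter.isCoboundedUnder_le_of_eventually_le (l := Filter.atTop) (x := (0:ℝ))
    exact Filter.eventually_atTop.mpr ⟨0, hPnn⟩
  have : ∀ ε > (0:ℝ), Filter.limsup P Filter.atTop ≤ K + ε := fun ε hε =>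
    Filter.limsup_le_of_le hcob (hev ε hε)
  exact le_of_forall_pos_le_add this
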